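/- For all games G, H, K over a poset A of atoms: if G ≤ H and H ≤ K then G ≤ K; if G ⊲ H and H ≤ K then G ⊲ K; and if G ≤ H and H ⊲ K then G ⊲ K. -/

import Mathlib

universe u

/-- The type of pre-games (normal-play combinatorial games), as formerly defined in Mathlib
(`SetTheory.PGame`), which has since been removed from Mathlib. -/
inductive SetTheory.PGame : Type (u + 1)
  | mk : ∀ α β : Type u, (α → SetTheory.PGame) → (β → SetTheory.PGame) → SetTheory.PGame

/-- The pre-game `0 = { | }`, as formerly defined in Mathlib. -/
instance SetTheory.PGame.instZeroPGame : Zero SetTheory.PGame :=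
  ⟨⟨PEmpty, PEmpty, PEmpty.elim, PEmpty.elim⟩⟩

/-- Combinatorial games over a poset `A` of atoms: either an atomic game `[a]` for an atom
`a : A`, or a composite game `⟨L|R⟩` where `L` and `R` are nonempty families of games
(the left and right options). -/
inductive PoGame (A : Type u) : Type (u + 1) where
  | atom : A → PoGame A
  | mk : (xl xr : Type u) → (xl → PoGame A) → (xr → PoGame A) →
      Nonempty xl → Nonempty xr → PoGame A

namespace PoGame

variable {A : Type u}

/-- `G` is an atomic game. -/
def IsAtomic : PoGame A → Prop
  | atom _ => True
  | mk _ _ _ _ _ _ => False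

/-- `G` is a left option of the game given as second argument. -/
def IsLeftOption (G : PoGame A) : PoGame A → Prop
  | atom _ => False
  | mk _ _ L _ _ _ => ∃ i, L i = G

/-- `G` is a right option of the game given as second argument. -/
def IsRightOption (G : PoGame A) : PoGame A → Prop
  | atom _ => False
  | mk _ _ _ R _ _ => ∃ j, R j = G

section Order

variable [PartialOrder A]

mutual
  /-- `Le G H` is the relation `G ≤ H` on games over the poset `A`, defined by mutual
  recursion with `Lf` (the relation `G ⊲ H`): `G ≤ H` iff every left option `G^L`
  satisfies `G^L ⊲ H`, every right option `H^R` satisfies `G ⊲ H^R`, and if `G` or `H`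
  is atomic then `G ⊲ H`. -/
  inductive Le : PoGame A → PoGame A → Prop
    | intro (G H : PoGame A)
        (hL : ∀ G', IsLeftOption G' G → Lf G' H)
        (hR : ∀ H', IsRightOption H' H → Lf G H')
        (hA : IsAtomic G ∨ IsAtomic H → Lf G H) : Le G H

  /-- `Lf G H` is the relation `G ⊲ H` on games over the poset `A`: it holds iff some
  right option `G^R` satisfies `G^R ≤ H`, or some left option `H^L` satisfies `G ≤ H^L`,
  or `G = [a]` and `H = [b]` are atomic with `a ≤ b` in `A`. -/
  inductive Lf : PoGame A → PoGame A → Prop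
    | rightOption (G H G' : PoGame A) (h : IsRightOption G' G) (hle : Le G' H) : Lf G H
    | leftOption (G H H' : PoGame A) (h : IsLeftOption H' H) (hle : Le G H') : Lf G H
    | atom (a b : A) (hab : a ≤ b) : Lf (atom a) (atom b)
end

/-- Two games are equivalent if `G ≤ H` and `H ≤ G`. -/
def GEquiv (G H : PoGame A) : Prop := Le G H ∧ Le H G

/-- `G` is locally monotone if `G ≤ G^L` for every left option `G^L` and `G^R ≤ G` for
every right option `G^R`. -/
def LocallyMonotone (G : PoGame A) : Prop :=
  (∀ G', IsLeftOption G' G → Le G G') ∧ (∀ G', IsRightOption G' G → Le G' G)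

/-- `G` is an option (left or right) of `H`. -/
def IsOption (G H : PoGame A) : Prop := IsLeftOption G H ∨ IsRightOption G H

/-- `G` is a position of `H`: `H` itself, an option of `H`, an option of an option, etc. -/
def IsPosition (G H : PoGame A) : Prop := Relation.ReflTransGen IsOption G H

/-- `G` is monotone if every position of `G` is locally monotone. -/
def Monotone (G : PoGame A) : Prop := ∀ K, IsPosition K G → LocallyMonotone K

end Order

/-- The 5-element linearly ordered set `L5 = {-3, -2, -1, 0, 1}`. -/
abbrev L5 : Type := {a : ℤ // -3 ≤ a ∧ a ≤ 1}

/-- `G` has mean `C`: an atomic game `[a]` has mean `a`, and a composite game has mean `C`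
iff every left option has mean `C + 1` and every right option has mean `C - 1`. -/
def HasMean : PoGame L5 → ℤ → Prop
  | atom a, C => (a : ℤ) = C
  | mk _ _ L R _ _, C => (∀ i, HasMean (L i) (C + 1)) ∧ (∀ j, HasMean (R j) (C - 1))

/-- The game `⟨G | H⟩` with a single left option `G` and a single right option `H`. -/
def ofPair (G H : PoGame A) : PoGame A :=
  mk PUnit PUnit (fun _ => G) (fun _ => H) ⟨PUnit.unit⟩ ⟨PUnit.unit⟩

/-- `⋆ = ⟨-1 | -3⟩`. -/
def star : PoGame L5 := ofPair (atom ⟨-1, by norm_num⟩) (atom ⟨-3, by norm_num⟩)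

/-- `M(G) = ⟨1 | G⟩`. -/
def M (G : PoGame L5) : PoGame L5 := ofPair (atom ⟨1, by norm_num⟩) G

/-- `P(G) = ⟨G | -2⟩`. -/
def P (G : PoGame L5) : PoGame L5 := ofPair G (atom ⟨-2, by norm_num⟩)

/-- `P⋆(G) = ⟨G | ⋆⟩`. -/
def Pstar (G : PoGame L5) : PoGame L5 := ofPair G star

/-- `Pn n G = P G` if `n` is odd, `P⋆ G` if `n` is even. -/
def Pn (n : ℕ) (G : PoGame L5) : PoGame L5 := if Odd n then P G else Pstar G

/-- The sequence `G_0 = [0]`, `G_{n+1} = M (Pn n (G_n))`. -/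
def Gseq : ℕ → PoGame L5
  | 0 => atom ⟨0, by norm_num⟩
  | n + 1 => M (Pn n (Gseq n))

/-- The normal-play game obtained from a game over `L5` by replacing every atom by the
normal-play game `0 = { | }`, keeping the tree of left and right options. -/
def np : PoGame L5 → SetTheory.PGame.{0}
  | atom _ => 0
  | mk xl xr L R _ _ => SetTheory.PGame.mk xl xr (fun i => np (L i)) (fun j => np (R j))

end PoGame

section Aux
open PoGame

variable {A : Type u} [PartialOrder A]

omit [PartialOrder A] in
lemma PoGame.isOption_wf : WellFounded (IsOption : PoGame A → PoGame A → Prop) := by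
  constructor
  intro G
  induction G with
  | atom a =>
      constructor; intro y hy
      rcases hy with h | h <;> exact h.elim
  | mk xl xr L R hl hr ihL ihR =>
      constructor; intro y hy
      rcases hy with ⟨i, hi⟩ | ⟨j, hj⟩
      · exact hi ▸ ihL i
      · exact hj ▸ ihR j

lemma PoGame.atom_le {a b : A} (h : a ≤ b) : Le (atom a) (atom b) := by
  refine Le.intro _ _ (fun G' hG' => hG'.elim) (fun H' hH' => hH'.elim) (fun _ => Lf.atom a b h)

theorem stmt_17_aux {A : Type u} [PartialOrder A] :
    ∀ t : (PoGame A × PoGame A) × PoGame A,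
    (Le t.1.1 t.1.2 → Le t.1.2 t.2 → Le t.1.1 t.2) ∧
    (Lf t.1.1 t.1.2 → Le t.1.2 t.2 → Lf t.1.1 t.2) ∧
    (Le t.1.1 t.1.2 → Lf t.1.2 t.2 → Lf t.1.1 t.2) := by
  have wf : WellFounded (Prod.GameAdd (Prod.GameAdd (IsOption (A := A)) (IsOption (A := A))) (IsOption (A := A))) :=
    (PoGame.isOption_wf.prod_gameAdd PoGame.isOption_wf).prod_gameAdd PoGame.isOption_wf
  intro t
  induction t using wf.induction with
  | _ t IH =>
  obtain ⟨⟨G, H⟩, K⟩ := t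
  simp only at IH ⊢
  -- part 2
  have P2 : Lf G H → Le H K → Lf G K := by
    intro h1 h2
    cases h1 with
    | rightOption _ _ G' hG' hle =>
        refine Lf.rightOption _ _ G' hG' ?_
        exact (IH ((G', H), K) (Prod.GameAdd.fst (Prod.GameAdd.fst (Or.inr hG')))).1 hle h2
    | leftOption _ _ H' hH' hle =>
        cases h2 with
        | intro _ _ hL hR hA =>
          exact (IH ((G, H'), K) (Prod.GameAdd.fst (Prod.GameAdd.snd (Or.inl hH')))).2.2
            hle (hL H' hH')
    | atom a b hab =>
        cases h2 with
        | intro _ _ hL hR hA =>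
        have hbK : Lf (atom b) K := hA (Or.inl trivial)
        cases hbK with
        | rightOption _ _ G' hG' hle => exact hG'.elim
        | leftOption _ _ K' hK' hle =>
            refine Lf.leftOption _ _ K' hK' ?_
            exact (IH ((atom a, atom b), K') (Prod.GameAdd.snd (Or.inl hK'))).1
              (PoGame.atom_le hab) hle
        | atom b c hbc => exact Lf.atom a c (hab.trans hbc)
  -- part 3
  have P3 : Le G H → Lf H K → Lf G K := by
    intro h1 h2
    cases h2 with
    | rightOption _ _ H' hH' hle =>
        cases h1 with
        | intro _ _ hL hR hA =>
          exact (IH ((G, H'), K) (Prod.GameAdd.fst (Prod.GameAdd.snd (Or.inr hH')))).2.1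
            (hR H' hH') hle
    | leftOption _ _ K' hK' hle =>
        refine Lf.leftOption _ _ K' hK' ?_
        exact (IH ((G, H), K') (Prod.GameAdd.snd (Or.inl hK'))).1 h1 hle
    | atom a b hab =>
        cases h1 with
        | intro _ _ hL hR hA =>
        have hGa : Lf G (atom a) := hA (Or.inr trivial)
        cases hGa with
        | rightOption _ _ G' hG' hle =>
            refine Lf.rightOption _ _ G' hG' ?_
            exact (IH ((G', atom a), atom b) (Prod.GameAdd.fst (Prod.GameAdd.fst (Or.inr hG')))).1
              hle (PoGame.atom_le hab)
        | leftOption _ _ H' hH' hle => exact hH'.elim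
        | atom c a hca => exact Lf.atom c b (hca.trans hab)
  refine ⟨?_, P2, P3⟩
  intro h1 h2
  refine Le.intro _ _ ?_ ?_ ?_
  · intro G' hG'
    cases h1 with
    | intro _ _ hL hR hA =>
      exact (IH ((G', H), K) (Prod.GameAdd.fst (Prod.GameAdd.fst (Or.inl hG')))).2.1
        (hL G' hG') h2
  · intro K' hK'
    cases h2 with
    | intro _ _ hL hR hA =>
      exact (IH ((G, H), K') (Prod.GameAdd.snd (Or.inr hK'))).2.2 h1 (hR K' hK')
  · rintro (hG | hK)
    · cases h1 with
      | intro _ _ hL hR hA => exact P2 (hA (Or.inl hG)) h2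
    · cases h2 with
      | intro _ _ hL hR hA => exact P3 h1 (hA (Or.inr hK))

end Aux

open PoGame in
/-- Transitivity properties: if `G ≤ H ≤ K` then `G ≤ K`; if `G ⊲ H ≤ K` then `G ⊲ K`;
and if `G ≤ H ⊲ K` then `G ⊲ K`. -/
theorem stmt_17 {A : Type u} [PartialOrder A] (G H K : PoGame A) :
    (Le G H → Le H K → Le G K) ∧
    (Lf G H → Le H K → Lf G K) ∧
    (Le G H → Lf H K → Lf G K) := by
  exact stmt_17_aux ((G, H), K)
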